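/- Let 𝓘 be a maximal nested collection on the vertex set V of a finite tree Γ and let v ∈ V. Then the connected components of I_v ∖ {v} are exactly the maximal elements, with respect to inclusion, of the family {I ∈ 𝓘 : I ⊊ I_v}. In particular, every connected component of I_v ∖ {v} belongs to 𝓘. -/

import Mathlib

namespace Paper

variable {V : Type*}

/-- The subgraph of `G` induced on `S` is connected (any two vertices of `S` are joined
by a walk inside `S`). -/
def Conn (G : SimpleGraph V) (S : Set V) : Prop := (G.induce S).Preconnected

/-- `C` is a connected component of (the subgraph of `G` induced on) `U`:
a maximal nonempty connected subset of `U`. -/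
def IsCompOf (G : SimpleGraph V) (C U : Set V) : Prop :=
  C.Nonempty ∧ C ⊆ U ∧ Conn G C ∧
    ∀ D : Set V, C ⊆ D → D ⊆ U → Conn G D → D = C

/-- A nested collection on (the vertex set of) `G`: a family of nonempty connected
subsets such that (1) any two members are nested or disjoint, and (2) the connected
components of the union of any pairwise disjoint subfamily are exactly the members of
that subfamily. -/
def Nested (G : SimpleGraph V) (𝓘 : Set (Set V)) : Prop :=
  (∀ S ∈ 𝓘, S.Nonempty ∧ Conn G S) ∧
  (∀ S ∈ 𝓘, ∀ T ∈ 𝓘, S ⊆ T ∨ T ⊆ S ∨ S ∩ T = ∅) ∧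
  (∀ 𝓙 ⊆ 𝓘, (𝓙.Pairwise fun A B => A ∩ B = ∅) →
    ∀ C : Set V, IsCompOf G C (⋃₀ 𝓙) ↔ C ∈ 𝓙)

/-- A maximal nested collection: a nested collection whose union is all of `V` and
which is not properly contained in any other nested collection. -/
def MaxNested (G : SimpleGraph V) (𝓘 : Set (Set V)) : Prop :=
  Nested G 𝓘 ∧ ⋃₀ 𝓘 = Set.univ ∧
    ∀ 𝓙 : Set (Set V), Nested G 𝓙 → 𝓘 ⊆ 𝓙 → 𝓙 = 𝓘

/-- `Iv` assigns to each vertex `v` the smallest element of `𝓘` containing `v`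
(denoted `I_v`). -/
def IsLeastContaining (𝓘 : Set (Set V)) (Iv : V → Set V) : Prop :=
  ∀ v : V, Iv v ∈ 𝓘 ∧ v ∈ Iv v ∧ ∀ J ∈ 𝓘, v ∈ J → Iv v ⊆ J

/-- The vertex set `[x,y]` of the unique path in a tree `G` from `x` to `y`:
the vertices lying on every path from `x` to `y`. -/
def interval (G : SimpleGraph V) (x y : V) : Set V :=
  {u | ∀ p : G.Walk x y, p.IsPath → u ∈ p.support}

/-- `S` is rooted with respect to the nested collection (with least-member function
`Iv`): `S` is nonempty, connected, and, `m` denoting the unique element of `S` with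
`S ⊆ I_m`, for all `i, j ∈ S` one has `i ∈ I_j` iff `j ∈ [i, m]`. -/
def Rooted (G : SimpleGraph V) (Iv : V → Set V) (S : Set V) : Prop :=
  S.Nonempty ∧ Conn G S ∧
    ∃ m ∈ S, S ⊆ Iv m ∧ ∀ i ∈ S, ∀ j ∈ S, (i ∈ Iv j ↔ j ∈ interval G i m)

/-- `S̄ := {v ∈ S : I_v ⊄ S}`. -/
def bar (Iv : V → Set V) (S : Set V) : Set V := {v ∈ S | ¬ Iv v ⊆ S}

/-- `S` is weakly rooted: `S` is nonempty, connected, and either `S̄ = ∅` or `S̄` is a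
(nonempty) connected rooted set. -/
def WeaklyRooted (G : SimpleGraph V) (Iv : V → Set V) (S : Set V) : Prop :=
  S.Nonempty ∧ Conn G S ∧ (bar Iv S = ∅ ∨ Rooted G Iv (bar Iv S))

/-- Two (nonempty connected) subsets `I`, `J` are compatible if `I ⊆ J`, or `J ⊆ I`, or
they are disjoint and no edge of `G` joins a vertex of `I` to a vertex of `J`. -/
def Compatible (G : SimpleGraph V) (I J : Set V) : Prop :=
  I ⊆ J ∨ J ⊆ I ∨ (I ∩ J = ∅ ∧ ∀ a ∈ I, ∀ b ∈ J, ¬ G.Adj a b)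

end Paper

namespace Paper

variable {V : Type*} {G : SimpleGraph V}

lemma walk_closed {D T : Set V}
    (hT : ∀ a b, a ∈ D → b ∈ D → G.Adj a b → a ∈ T → b ∈ T) :
    ∀ {x y : ↥D} (_ : (G.induce D).Walk x y), x.val ∈ T → y.val ∈ T := by
  intro x y p
  induction p with
  | nil => exact id
  | cons h q ih =>
    rename_i a b c
    intro ha
    exact ih (hT a b a.2 b.2 h ha)

lemma reach_closed {D T : Set V} (hD : Conn G D)
    (hT : ∀ a b, a ∈ D → b ∈ D → G.Adj a b → a ∈ T → b ∈ T)
    {c : V} (hc : c ∈ D) (hcT : c ∈ T) : D ⊆ T := by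
  intro d hd
  obtain ⟨p⟩ := hD ⟨c, hc⟩ ⟨d, hd⟩
  exact walk_closed hT p hcT

lemma conn_insert {S : Set V} {a b : V} (hS : Conn G S) (hne : S.Nonempty)
    (ha : a ∈ S) (hab : G.Adj a b) : Conn G (insert b S) := by
  haveI : Nonempty ↥S := hne.to_subtype
  haveI : Nonempty ({b} : Set V) := ⟨⟨b, rfl⟩⟩
  have hSc : (G.induce S).Connected := SimpleGraph.Connected.mk hS
  have hbc : (G.induce ({b} : Set V)).Connected := by
    apply SimpleGraph.Connected.mk
    intro x y
    have hxy : x = y := Subtype.ext (by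
      have hx := x.2; have hy := y.2
      simp only [Set.mem_singleton_iff] at hx hy
      rw [hx, hy])
    rw [hxy]
  have hu := SimpleGraph.connected_induce_union hSc.preconnected hbc.preconnected ha rfl hab
  have h2 : S ∪ {b} = insert b S := by ext x; simp [or_comm]
  rw [h2] at hu
  exact hu.preconnected

/-- A component has no neighbours in `U` outside itself. -/
lemma comp_no_adj {C U : Set V} (hC : IsCompOf G C U) {a b : V}
    (ha : a ∈ C) (hb : b ∈ U) (hbC : b ∉ C) : ¬ G.Adj a b := by
  intro hadj
  obtain ⟨hne, hsub, hconn, hmax⟩ := hC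
  have h1 : Conn G (insert b C) := conn_insert hconn hne ha hadj
  have h2 : insert b C ⊆ U := Set.insert_subset hb hsub
  have := hmax (insert b C) (Set.subset_insert _ _) h2 h1
  exact hbC (this ▸ Set.mem_insert b C)

/-- A connected subset of `U` meeting a component is contained in it. -/
lemma subset_comp_of_inter {C U J : Set V} (hC : IsCompOf G C U)
    (hJU : J ⊆ U) (hJc : Conn G J) {x : V} (hxJ : x ∈ J) (hxC : x ∈ C) : J ⊆ C := by
  refine reach_closed hJc ?_ hxJ hxC
  intro a b haJ hbJ hadj haC
  by_contra hbC
  exact comp_no_adj hC haC (hJU hbJ) hbC hadj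

/-- Every nonempty connected subset of `U` is contained in some component (finite case). -/
lemma exists_comp [Finite V] {U J : Set V} (hJU : J ⊆ U) (hJne : J.Nonempty)
    (hJc : Conn G J) : ∃ C, IsCompOf G C U ∧ J ⊆ C := by
  have hfin : {D : Set V | J ⊆ D ∧ D ⊆ U ∧ Conn G D}.Finite := Set.toFinite _
  obtain ⟨C, hCmem, hCmax⟩ :=
    Set.Finite.exists_maximalFor id _ hfin ⟨J, le_refl J, hJU, hJc⟩
  obtain ⟨hJC, hCU, hCc⟩ := hCmem
  refine ⟨C, ⟨hJne.mono hJC, hCU, hCc, ?_⟩, hJC⟩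
  intro D hCD hDU hDc
  exact le_antisymm (hCmax ⟨hJC.trans hCD, hDU, hDc⟩ hCD) hCD

/-- Components of a disjoint union of connected sets with no cross edges are the sets. -/
lemma partition_comp {𝓙 : Set (Set V)}
    (hne : ∀ J ∈ 𝓙, J.Nonempty) (hconn : ∀ J ∈ 𝓙, Conn G J)
    (hdisj : 𝓙.Pairwise fun A B => A ∩ B = ∅)
    (hedge : ∀ J ∈ 𝓙, ∀ J' ∈ 𝓙, J ≠ J' → ∀ a ∈ J, ∀ b ∈ J', ¬ G.Adj a b)
    (C : Set V) : IsCompOf G C (⋃₀ 𝓙) ↔ C ∈ 𝓙 := by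
  constructor
  · rintro ⟨hCne, hCsub, hCconn, hCmax⟩
    obtain ⟨c, hc⟩ := hCne
    obtain ⟨J, hJ, hcJ⟩ := hCsub hc
    have hCJ : C ⊆ J := by
      refine reach_closed hCconn ?_ hc hcJ
      intro a b haC hbC hadj haJ
      by_contra hbJ
      obtain ⟨J', hJ', hbJ'⟩ := hCsub hbC
      have hne' : J ≠ J' := fun h => hbJ (h ▸ hbJ')
      exact hedge J hJ J' hJ' hne' a haJ b hbJ' hadj
    have := hCmax J hCJ (Set.subset_sUnion_of_mem hJ) (hconn J hJ)
    exact this ▸ hJ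
  · intro hC
    refine ⟨hne C hC, Set.subset_sUnion_of_mem hC, hconn C hC, ?_⟩
    intro D hCD hDsub hDc
    obtain ⟨c, hc⟩ := hne C hC
    have hDC : D ⊆ C := by
      refine reach_closed hDc ?_ (hCD hc) hc
      intro a b haD hbD hadj haC
      by_contra hbC
      obtain ⟨J', hJ', hbJ'⟩ := hDsub hbD
      have hne' : C ≠ J' := fun h => hbC (h ▸ hbJ')
      exact hedge C hC J' hJ' hne' a haC b hbJ' hadj
    exact le_antisymm hDC hCD

/-- Disjoint members of a nested collection have no edges between them. -/
lemma nested_no_edge {𝓘 : Set (Set V)} (h : Nested G 𝓘) {J J' : Set V}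
    (hJ : J ∈ 𝓘) (hJ' : J' ∈ 𝓘) (hd : J ∩ J' = ∅) :
    ∀ a ∈ J, ∀ b ∈ J', ¬ G.Adj a b := by
  intro a ha b hb hadj
  obtain ⟨h0, h1, h2⟩ := h
  have hJne : J.Nonempty := (h0 J hJ).1
  have hneq : J ≠ J' := by
    rintro rfl
    rw [Set.inter_self] at hd
    exact hJne.ne_empty hd
  have hpair : ({J, J'} : Set (Set V)).Pairwise fun A B => A ∩ B = ∅ := by
    intro A hA B hB hAB
    simp only [Set.mem_insert_iff, Set.mem_singleton_iff] at hA hB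
    rcases hA with rfl | rfl <;> rcases hB with rfl | rfl
    · exact absurd rfl hAB
    · exact hd
    · rw [Set.inter_comm]; exact hd
    · exact absurd rfl hAB
  have hsub : ({J, J'} : Set (Set V)) ⊆ 𝓘 := by
    intro A hA; rcases hA with rfl | hA
    · exact hJ
    · rw [Set.mem_singleton_iff] at hA; exact hA ▸ hJ'
  have hcomp := (h2 {J, J'} hsub hpair J).mpr (Set.mem_insert _ _)
  have hU : ⋃₀ ({J, J'} : Set (Set V)) = J ∪ J' := by simp
  rw [hU] at hcomp
  have hb' : b ∈ J ∪ J' := Or.inr hb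
  have hbJ : b ∉ J := fun h => (Set.eq_empty_iff_forall_notMem.mp hd b) ⟨h, hb⟩
  exact comp_no_adj hcomp ha hb' hbJ hadj

end Paper

/-- Let `𝓘` be a maximal nested collection on the vertex set `V` of a finite tree and
let `v ∈ V`. Then the connected components of `I_v \ {v}` are exactly the maximal
elements, with respect to inclusion, of the family `{I ∈ 𝓘 : I ⊊ I_v}`. In particular,
every connected component of `I_v \ {v}` belongs to `𝓘`. -/
theorem statement_11 {V : Type*} [Fintype V] (G : SimpleGraph V) (hG : G.IsTree)
    (𝓘 : Set (Set V)) (h𝓘 : Paper.MaxNested G 𝓘)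
    (Iv : V → Set V) (hIv : Paper.IsLeastContaining 𝓘 Iv) (v : V) :
    (∀ C : Set V, Paper.IsCompOf G C (Iv v \ {v}) ↔
      (C ∈ 𝓘 ∧ C ⊂ Iv v ∧ ∀ J ∈ 𝓘, J ⊂ Iv v → C ⊆ J → J = C)) ∧
    (∀ C : Set V, Paper.IsCompOf G C (Iv v \ {v}) → C ∈ 𝓘) := by
  classical
  obtain ⟨hN, hUniv, hMax⟩ := h𝓘
  obtain ⟨hNC, hPair, hComp⟩ := hN
  obtain ⟨hIvmem, hvIv, hleast⟩ := hIv v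
  have hvnot : ∀ J ∈ 𝓘, J ⊂ Iv v → v ∉ J := by
    intro J hJ hJs hvJ
    exact hJs.ne (le_antisymm hJs.le (hleast J hJ hvJ))
  have hsub : ∀ J ∈ 𝓘, J ⊂ Iv v → J ⊆ Iv v \ {v} := by
    intro J hJ hJs x hx
    exact ⟨hJs.le hx, fun h => hvnot J hJ hJs (Set.mem_singleton_iff.mp h ▸ hx)⟩
  have key : ∀ C : Set V, Paper.IsCompOf G C (Iv v \ {v}) → C ∈ 𝓘 := by
    intro C hC
    obtain ⟨hCne, hCsub, hCconn, hCmax⟩ := hC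
    have hCIv : C ⊆ Iv v := hCsub.trans Set.diff_subset
    have compat : ∀ J ∈ 𝓘, C ⊆ J ∨ J ⊆ C ∨
        (C ∩ J = ∅ ∧ ∀ a ∈ C, ∀ b ∈ J, ¬ G.Adj a b) := by
      intro J hJ
      rcases hPair J hJ (Iv v) hIvmem with hJI | hIJ | hd
      · by_cases hvJ : v ∈ J
        · exact Or.inl (hCIv.trans (hleast J hJ hvJ))
        · have hJsub : J ⊆ Iv v \ {v} := fun x hx =>
            ⟨hJI hx, fun h => hvJ (Set.mem_singleton_iff.mp h ▸ hx)⟩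
          by_cases hint : (J ∩ C).Nonempty
          · obtain ⟨x, hxJ, hxC⟩ := hint
            exact Or.inr (Or.inl (Paper.subset_comp_of_inter
              ⟨hCne, hCsub, hCconn, hCmax⟩ hJsub (hNC J hJ).2 hxJ hxC))
          · refine Or.inr (Or.inr ⟨?_, ?_⟩)
            · rw [Set.inter_comm]; exact Set.not_nonempty_iff_eq_empty.mp hint
            · intro a ha b hb hadj
              have hbC : b ∉ C := fun h => hint ⟨b, hb, h⟩
              exact Paper.comp_no_adj ⟨hCne, hCsub, hCconn, hCmax⟩ ha (hJsub hb) hbC hadj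
      · exact Or.inl (hCIv.trans hIJ)
      · refine Or.inr (Or.inr ⟨?_, ?_⟩)
        · apply Set.eq_empty_iff_forall_notMem.mpr
          rintro x ⟨hxC, hxJ⟩
          exact Set.eq_empty_iff_forall_notMem.mp hd x ⟨hxJ, hCIv hxC⟩
        · intro a ha b hb hadj
          exact Paper.nested_no_edge ⟨hNC, hPair, hComp⟩ hJ hIvmem hd b hb a (hCIv ha) hadj.symm
    have hnested : Paper.Nested G (insert C 𝓘) := by
      refine ⟨?_, ?_, ?_⟩
      · rintro S (rfl | hS)
        · exact ⟨hCne, hCconn⟩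
        · exact hNC S hS
      · rintro S (rfl | hS) T (rfl | hT)
        · exact Or.inl (le_refl _)
        · rcases compat T hT with h | h | h
          · exact Or.inl h
          · exact Or.inr (Or.inl h)
          · exact Or.inr (Or.inr h.1)
        · rcases compat S hS with h | h | h
          · exact Or.inr (Or.inl h)
          · exact Or.inl h
          · refine Or.inr (Or.inr ?_); rw [Set.inter_comm]; exact h.1
        · exact hPair S hS T hT
      · intro 𝓙 h𝓙 hpair D
        by_cases hC𝓙 : C ∈ 𝓙 ∧ C ∉ 𝓘
        · obtain ⟨hC1, hC2⟩ := hC𝓙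
          apply Paper.partition_comp
          · intro J hJ
            rcases h𝓙 hJ with rfl | hJ'
            · exact hCne
            · exact (hNC J hJ').1
          · intro J hJ
            rcases h𝓙 hJ with rfl | hJ'
            · exact hCconn
            · exact (hNC J hJ').2
          · exact hpair
          · intro J hJ J' hJ' hne a ha b hb hadj
            have hdisj := hpair hJ hJ' hne
            have noedgeC : ∀ J₀ ∈ 𝓘, C ∩ J₀ = ∅ → ∀ a ∈ C, ∀ b ∈ J₀, ¬ G.Adj a b := by
              intro J₀ hJ₀ hd0 a' ha' b' hb' hadj'
              rcases compat J₀ hJ₀ with h | h | h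
              · obtain ⟨c, hc⟩ := hCne
                exact Set.eq_empty_iff_forall_notMem.mp hd0 c ⟨hc, h hc⟩
              · obtain ⟨c, hc⟩ := (hNC J₀ hJ₀).1
                exact Set.eq_empty_iff_forall_notMem.mp hd0 c ⟨h hc, hc⟩
              · exact h.2 a' ha' b' hb' hadj'
            rcases h𝓙 hJ with rfl | hJm <;> rcases h𝓙 hJ' with hJ'e | hJ'm
            · exact hne hJ'e.symm
            · exact noedgeC J' hJ'm hdisj a ha b hb hadj
            · subst hJ'e
              refine noedgeC J hJm ?_ b hb a ha hadj.symm
              rw [Set.inter_comm]; exact hdisj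
            · exact Paper.nested_no_edge ⟨hNC, hPair, hComp⟩ hJm hJ'm hdisj a ha b hb hadj
        · have h𝓙' : 𝓙 ⊆ 𝓘 := by
            intro J hJ
            rcases h𝓙 hJ with rfl | hJ'
            · by_contra h
              exact hC𝓙 ⟨hJ, h⟩
            · exact hJ'
          exact hComp 𝓙 h𝓙' hpair D
    have heq := hMax (insert C 𝓘) hnested (Set.subset_insert _ _)
    rw [← heq]; exact Set.mem_insert _ _
  have fwd : ∀ C : Set V, Paper.IsCompOf G C (Iv v \ {v}) →
      C ∈ 𝓘 ∧ C ⊂ Iv v ∧ ∀ J ∈ 𝓘, J ⊂ Iv v → C ⊆ J → J = C := by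
    intro C hC
    have hCI := key C hC
    obtain ⟨hCne, hCsub, hCconn, hCmax⟩ := hC
    have hvC : v ∉ C := fun h => (hCsub h).2 rfl
    have hss : C ⊂ Iv v := by
      refine HasSubset.Subset.ssubset_of_ne (hCsub.trans Set.diff_subset) ?_
      rintro rfl
      exact hvC hvIv
    refine ⟨hCI, hss, ?_⟩
    intro J hJ hJs hCJ
    exact hCmax J hCJ (hsub J hJ hJs) (hNC J hJ).2
  refine ⟨fun C => ⟨fwd C, ?_⟩, key⟩
  rintro ⟨hCI, hCs, hCm⟩
  have hCne : C.Nonempty := (hNC C hCI).1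
  have hCconn := (hNC C hCI).2
  obtain ⟨D, hD, hCD⟩ := Paper.exists_comp (hsub C hCI hCs) hCne hCconn
  obtain ⟨hDI, hDs, _⟩ := fwd D hD
  have := hCm D hDI hDs hCD
  rwa [this] at hD
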